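/- The internal hom [p,q] := ∑_{φ : p→q} y^{∑_{I∈p(1)} q[φ(I)]} is right adjoint to Dirichlet tensor: for all polynomials p, q, r there is a bijection Poly(p ⊗ q, r) ≅ Poly(p, [q,r]), natural in p and r. -/
import Mathlib


/-- A map of polynomial functors: forwards on positions, backwards on directions. -/
structure PolyHom (p q : PFunctor.{0}) where
  onPos : p.A → q.A
  onDir : ∀ a : p.A, q.B (onPos a) → p.B a

/-- The identity map of polynomials. -/
def PolyHom.id (p : PFunctor.{0}) : PolyHom p p :=
  ⟨fun a => a, fun _ d => d⟩

/-- Composition of maps of polynomials. -/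
def PolyHom.comp {p q r : PFunctor.{0}} (f : PolyHom p q) (g : PolyHom q r) :
    PolyHom p r :=
  ⟨fun a => g.onPos (f.onPos a), fun a d => f.onDir a (g.onDir (f.onPos a) d)⟩

/-- The Dirichlet tensor product: positions multiply and directions multiply. -/
def PolyTensor (p q : PFunctor.{0}) : PFunctor.{0} :=
  ⟨p.A × q.A, fun ab => p.B ab.1 × q.B ab.2⟩

/-- The polynomial `y`, with one position and one direction. -/
def yPoly : PFunctor.{0} := ⟨PUnit, fun _ => PUnit⟩

/-- Dirichlet tensor of maps of polynomials. -/
def PolyHom.tensor {p p' q q' : PFunctor.{0}} (f : PolyHom p p') (g : PolyHom q q') :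
    PolyHom (PolyTensor p q) (PolyTensor p' q') :=
  ⟨fun ab => (f.onPos ab.1, g.onPos ab.2), fun ab d => (f.onDir ab.1 d.1, g.onDir ab.2 d.2)⟩

/-- An isomorphism of polynomial functors. -/
structure PolyIso (p q : PFunctor.{0}) where
  hom : PolyHom p q
  inv : PolyHom q p
  hom_inv : hom.comp inv = PolyHom.id p
  inv_hom : inv.comp hom = PolyHom.id q

/-- The internal hom polynomial [q,r] = ∑_{φ : q→r} y^{∑_{J∈q(1)} r[φ(J)]}. -/
def PolyIhom (q r : PFunctor.{0}) : PFunctor.{0} :=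
  ⟨PolyHom q r, fun φ => Σ J : q.A, r.B (φ.onPos J)⟩

/-- Postcomposition [q,r] → [q,r'] by a map r → r'. -/
def PolyHom.ihomMap {q r r' : PFunctor.{0}} (β : PolyHom r r') :
    PolyHom (PolyIhom q r) (PolyIhom q r') :=
  ⟨fun φ => φ.comp β, fun φ d => ⟨d.1, β.onDir (φ.onPos d.1) d.2⟩⟩

/-- The internal hom [q,-] is right adjoint to Dirichlet tensor -⊗q:
Poly(p ⊗ q, r) ≅ Poly(p, [q,r]), naturally in p and r. -/
theorem stmt_10 (q : PFunctor.{0}) :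
    ∃ e : ∀ p r : PFunctor.{0}, PolyHom (PolyTensor p q) r ≃ PolyHom p (PolyIhom q r),
      (∀ (p p' r : PFunctor.{0}) (α : PolyHom p' p) (f : PolyHom (PolyTensor p q) r),
        e p' r ((α.tensor (PolyHom.id q)).comp f) = α.comp (e p r f)) ∧
      (∀ (p r r' : PFunctor.{0}) (β : PolyHom r r') (f : PolyHom (PolyTensor p q) r),
        e p r' (f.comp β) = (e p r f).comp (PolyHom.ihomMap β)) := by
  refine ⟨fun p r => ⟨
    fun f => ⟨fun a => ⟨fun b => f.onPos (a, b), fun b d => (f.onDir (a, b) d).2⟩,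
      fun a d => (f.onDir (a, d.1) d.2).1⟩,
    fun g => ⟨fun ab => (g.onPos ab.1).onPos ab.2,
      fun ab d => (g.onDir ab.1 ⟨ab.2, d⟩, (g.onPos ab.1).onDir ab.2 d)⟩,
    fun f => rfl, fun g => rfl⟩, fun p p' r α f => rfl, fun p r r' β f => rfl⟩
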